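/- If E is a right proper, admissibly left exact full subcategory of a model category M containing all fibrant objects, then every pullback square in E whose one leg is a fibration is a homotopy pullback square in M. -/

import Mathlib

universe w v u

open CategoryTheory CategoryTheory.Limits Opposite

namespace Paper

variable {C : Type u} [Category.{v} C]

/-- `g` is a retract of `f` in the arrow category. -/
def IsRetractOfArrow {X Y A B : C} (g : X ⟶ Y) (f : A ⟶ B) : Prop :=
  ∃ (i : X ⟶ A) (r : A ⟶ X) (i' : Y ⟶ B) (r' : B ⟶ Y),
    i ≫ r = 𝟙 X ∧ i' ≫ r' = 𝟙 Y ∧ i ≫ f = g ≫ i' ∧ r ≫ g = f ≫ r'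

/-- `f` is a pushout of some morphism belonging to `I`. -/
def IsPushoutOfElem (I : MorphismProperty C) {X Y : C} (f : X ⟶ Y) : Prop :=
  ∃ (A B : C) (g : A ⟶ B) (h : A ⟶ X) (k : B ⟶ Y), I g ∧ IsPushout g h k f

/-- The inclusion of the interval `[⊥, j)` into a preorder. -/
def ltInclusion {J : Type w} [Preorder J] (j : J) : Set.Iio j ⥤ J :=
  (show Monotone (fun k : Set.Iio j => (k : J)) from fun _ _ h => h).functor

/-- The canonical cocone on the restriction of `F` to `[⊥, j)`, with vertex `F.obj j`. -/
@[simps]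
def coconeLT {J : Type w} [Preorder J] (F : J ⥤ C) (j : J) :
    Limits.Cocone (ltInclusion j ⋙ F) where
  pt := F.obj j
  ι :=
    { app := fun k => F.map (homOfLE (le_of_lt k.2))
      naturality := fun k l h => by
        first
        | exact (F.map_comp _ _).symm.trans
            ((congrArg F.map (by apply Subsingleton.elim)).trans (Category.comp_id _).symm)
        | (simp only [Functor.comp_map, Functor.const_obj_map, Category.comp_id]
           exact (F.map_comp _ _).symm.trans (congrArg F.map (by apply Subsingleton.elim)))
        | (dsimp; simp only [Category.comp_id, ← F.map_comp]; congr 1; apply Subsingleton.elim) }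

/-- A witness that `f` is a transfinite composition of pushouts of morphisms of `I`:
a colimit-preserving well-ordered chain starting at the source of `f`, each successor
step of which is a pushout of a morphism of `I`, whose composition is `f`. -/
structure TransfiniteCompositionWitness (I : MorphismProperty C) {X Y : C} (f : X ⟶ Y) where
  J : Type v
  [linOrd : LinearOrder J]
  [orderBot : OrderBot J]
  [succOrder : SuccOrder J]
  [wellFounded : WellFoundedLT J]
  F : J ⥤ C
  c : Limits.Cocone F
  isColimit : Limits.IsColimit c
  isoBot : X ≅ F.obj ⊥
  isoPt : c.pt ≅ Y
  fac : f = isoBot.hom ≫ c.ι.app ⊥ ≫ isoPt.hom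
  succ : ∀ j : J, ¬ IsMax j → IsPushoutOfElem I (F.map (homOfLE (Order.le_succ j)))
  limit : ∀ j : J, Order.IsSuccLimit j → Nonempty (Limits.IsColimit (coconeLT F j))

/-- `cell I`: the class of transfinite compositions of pushouts of morphisms of `I`. -/
def transfiniteCell (I : MorphismProperty C) : MorphismProperty C :=
  fun _ _ f => Nonempty (TransfiniteCompositionWitness I f)

/-- `inj I`: the class of morphisms with the right lifting property with respect to `I`. -/
def injClass (I : MorphismProperty C) : MorphismProperty C :=
  fun _ _ q => ∀ ⦃A B : C⦄ (g : A ⟶ B), I g → HasLiftingProperty g q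

/-- `cof I`: the class of morphisms with the left lifting property with respect to `inj I`. -/
def cofClass (I : MorphismProperty C) : MorphismProperty C :=
  fun _ _ f => ∀ ⦃X Y : C⦄ (q : X ⟶ Y), injClass I q → HasLiftingProperty f q

/-- A model structure on a category: weak equivalences, cofibrations and fibrations,
subject to the two-out-of-three, retract, lifting and factorization axioms. -/
structure ModelStructure (C : Type u) [Category.{v} C] : Type (max u v) where
  W : MorphismProperty C
  Cof : MorphismProperty C
  Fib : MorphismProperty C
  w_of_iso : ∀ {X Y : C} (f : X ⟶ Y), IsIso f → W f
  cof_of_iso : ∀ {X Y : C} (f : X ⟶ Y), IsIso f → Cof f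
  fib_of_iso : ∀ {X Y : C} (f : X ⟶ Y), IsIso f → Fib f
  w_comp : ∀ {X Y Z : C} (f : X ⟶ Y) (g : Y ⟶ Z), W f → W g → W (f ≫ g)
  w_cancel_left : ∀ {X Y Z : C} (f : X ⟶ Y) (g : Y ⟶ Z), W f → W (f ≫ g) → W g
  w_cancel_right : ∀ {X Y Z : C} (f : X ⟶ Y) (g : Y ⟶ Z), W g → W (f ≫ g) → W f
  cof_comp : ∀ {X Y Z : C} (f : X ⟶ Y) (g : Y ⟶ Z), Cof f → Cof g → Cof (f ≫ g)
  fib_comp : ∀ {X Y Z : C} (f : X ⟶ Y) (g : Y ⟶ Z), Fib f → Fib g → Fib (f ≫ g)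
  w_retract : ∀ {X Y A B : C} (g : X ⟶ Y) (f : A ⟶ B),
    IsRetractOfArrow g f → W f → W g
  cof_retract : ∀ {X Y A B : C} (g : X ⟶ Y) (f : A ⟶ B),
    IsRetractOfArrow g f → Cof f → Cof g
  fib_retract : ∀ {X Y A B : C} (g : X ⟶ Y) (f : A ⟶ B),
    IsRetractOfArrow g f → Fib f → Fib g
  lift_trivCof_fib : ∀ {A B X Y : C} (i : A ⟶ B) (p : X ⟶ Y),
    Cof i → W i → Fib p → HasLiftingProperty i p
  lift_cof_trivFib : ∀ {A B X Y : C} (i : A ⟶ B) (p : X ⟶ Y),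
    Cof i → Fib p → W p → HasLiftingProperty i p
  fact_cof_trivFib : ∀ {X Y : C} (f : X ⟶ Y),
    ∃ (Z : C) (i : X ⟶ Z) (p : Z ⟶ Y), Cof i ∧ Fib p ∧ W p ∧ i ≫ p = f
  fact_trivCof_fib : ∀ {X Y : C} (f : X ⟶ Y),
    ∃ (Z : C) (i : X ⟶ Z) (p : Z ⟶ Y), Cof i ∧ W i ∧ Fib p ∧ i ≫ p = f

variable {D : Type u} [Category.{v} D]

/-- An object is fibrant if the morphism to the terminal object is a fibration. -/
def ModelStructure.Fibrant [Limits.HasTerminal C] (M : ModelStructure C) (X : C) : Prop :=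
  M.Fib (Limits.terminal.from X)

/-- An object is cofibrant if the morphism from the initial object is a cofibration. -/
def ModelStructure.Cofibrant [Limits.HasInitial C] (M : ModelStructure C) (X : C) : Prop :=
  M.Cof (Limits.initial.to X)

variable (M : ModelStructure C)

/-- A full subcategory (given by a set of objects) is admissibly left exact if it contains
a pullback of any of its morphisms along any of its fibrations. -/
def AdmissiblyLeftExact (E : Set C) : Prop :=
  ∀ {X X' Y : C} (f : X' ⟶ X) (p : Y ⟶ X), X ∈ E → X' ∈ E → Y ∈ E → M.Fib p →
    ∃ (P : C) (fst : P ⟶ X') (snd : P ⟶ Y), P ∈ E ∧ IsPullback fst snd f p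

/-- A full subcategory is partially left exact if it contains a pullback of any of its
weak equivalences along any of its fibrations. -/
def PartiallyLeftExact (E : Set C) : Prop :=
  ∀ {X X' Y : C} (f : X' ⟶ X) (p : Y ⟶ X), X ∈ E → X' ∈ E → Y ∈ E → M.W f → M.Fib p →
    ∃ (P : C) (fst : P ⟶ X') (snd : P ⟶ Y), P ∈ E ∧ IsPullback fst snd f p

/-- A full subcategory is right proper if, within it, pullbacks of weak equivalences along
fibrations are weak equivalences. -/
def RightProperOn (E : Set C) : Prop :=
  ∀ {X X' Y P : C} (w : X' ⟶ X) (p : Y ⟶ X) (fst : P ⟶ X') (snd : P ⟶ Y),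
    X ∈ E → X' ∈ E → Y ∈ E → P ∈ E → M.W w → M.Fib p →
    IsPullback fst snd w p → M.W snd

/-- A full subcategory is stable under trivial fibrations if the source of any trivial
fibration with target in it belongs to it. -/
def StableUnderTrivFib (E : Set C) : Prop :=
  ∀ {X Y : C} (p : Y ⟶ X), X ∈ E → M.Fib p → M.W p → Y ∈ E

/-- A commutative square is a homotopy pullback if, for every fibrant replacement of its
cospan (fibrant objects, one leg a fibration), the comparison morphism from the initial
vertex to the pullback of the replaced cospan is a weak equivalence. -/
def IsHomotopyPullback [HasTerminal C] (M : ModelStructure C) {P X Y Z : C}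
    (fst : P ⟶ X) (snd : P ⟶ Y) (f : X ⟶ Z) (g : Y ⟶ Z) : Prop :=
  ∀ {X' Y' Z' : C} (f' : X' ⟶ Z') (g' : Y' ⟶ Z')
    (rX : X ⟶ X') (rY : Y ⟶ Y') (rZ : Z ⟶ Z'),
    M.Fibrant X' → M.Fibrant Y' → M.Fibrant Z' → M.Fib g' →
    M.W rX → M.W rY → M.W rZ →
    f ≫ rZ = rX ≫ f' → g ≫ rZ = rY ≫ g' →
    ∀ {Q : C} (fst' : Q ⟶ X') (snd' : Q ⟶ Y'), IsPullback fst' snd' f' g' →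
      ∀ (c : P ⟶ Q), c ≫ fst' = fst ≫ rX → c ≫ snd' = snd ≫ rY → M.W c

/-- Pullbacks of fibrations are fibrations. -/
theorem ModelStructure.fib_pullback {P' X' Y' Z' : C} {fst : P' ⟶ X'} {snd : P' ⟶ Y'}
    {f : X' ⟶ Z'} {g : Y' ⟶ Z'} (h : IsPullback fst snd f g) (hgf : M.Fib g) :
    M.Fib fst := by
  have rlp : ∀ {A B : C} (i : A ⟶ B), M.Cof i → M.W i → HasLiftingProperty i fst := by
    intro A B i hci hwi
    constructor
    intro u v huv
    haveI := M.lift_trivCof_fib i g hci hwi hgf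
    have sq2 : CommSq (u ≫ snd) i g (v ≫ f) := ⟨by
      rw [Category.assoc, ← h.w, ← Category.assoc, huv.w, Category.assoc]⟩
    refine CommSq.HasLift.mk'
      { l := h.lift v sq2.lift (by rw [sq2.fac_right]), fac_left := ?_, fac_right := ?_ }
    · apply h.hom_ext
      · rw [Category.assoc, h.lift_fst, huv.w]
      · rw [Category.assoc, h.lift_snd, sq2.fac_left]
    · exact h.lift_fst _ _ _
  obtain ⟨M₀, j, p₀, hcj, hwj, hfp₀, hfac⟩ := M.fact_trivCof_fib fst
  haveI := rlp j hcj hwj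
  have sq3 : CommSq (𝟙 P') j fst p₀ := ⟨by rw [Category.id_comp, hfac]⟩
  refine M.fib_retract fst p₀ ⟨j, sq3.lift, 𝟙 X', 𝟙 X', sq3.fac_left, Category.id_comp _,
    ?_, ?_⟩ hfp₀
  · rw [hfac, Category.comp_id]
  · rw [sq3.fac_right, Category.comp_id]

/-- The source of a fibration with fibrant target is fibrant. -/
theorem ModelStructure.fibrant_of_fib [HasTerminal C] {A B : C} (q : A ⟶ B)
    (hq : M.Fib q) (hB : M.Fibrant B) : M.Fibrant A := by
  have : terminal.from A = q ≫ terminal.from B := (terminal.comp_from q).symm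
  rw [ModelStructure.Fibrant, this]
  exact M.fib_comp _ _ hq hB

/-- If `E` is a right proper, admissibly left exact full subcategory of
a model category `M` containing all fibrant objects, then every pullback square in `E`
with one leg a fibration is a homotopy pullback square in `M`. -/
theorem statement12 [HasTerminal C] (E : Set C)
    (h1 : RightProperOn M E) (h2 : AdmissiblyLeftExact M E)
    (h3 : ∀ X : C, M.Fibrant X → X ∈ E)
    {P X Y Z : C} (hP : P ∈ E) (hX : X ∈ E) (hY : Y ∈ E) (hZ : Z ∈ E)
    (fst : P ⟶ X) (snd : P ⟶ Y) (f : X ⟶ Z) (g : Y ⟶ Z)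
    (hg : M.Fib g) (sq : IsPullback fst snd f g) :
    IsHomotopyPullback M fst snd f g := by
  intro X' Y' Z' f' g' rX rY rZ hX' hY' hZ' hg' hrX hrY hrZ sqX sqY Q fst' snd' hQpb c hc1 hc2
  have hX'E := h3 X' hX'
  have hY'E := h3 Y' hY'
  have hZ'E := h3 Z' hZ'
  -- Step 0: factor `rZ` as a trivial cofibration `iZ` followed by a fibration `pZ`.
  obtain ⟨Zt, iZ, pZ, hiZc, hiZw, hpZf, hiZfac⟩ := M.fact_trivCof_fib rZ
  have hZtE := h3 Zt (M.fibrant_of_fib pZ hpZf hZ')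
  have hpZw : M.W pZ := M.w_cancel_left iZ pZ hiZw (by rw [hiZfac]; exact hrZ)
  -- Step 1: factor `f ≫ iZ` and `g ≫ iZ` and `f'`.
  obtain ⟨Xt, iX, pt, hiXc, hiXw, hptf, hiXfac⟩ := M.fact_trivCof_fib (f ≫ iZ)
  have hXtE := h3 Xt (M.fibrant_of_fib pt hptf (M.fibrant_of_fib pZ hpZf hZ'))
  obtain ⟨Yt, iY, qt, hiYc, hiYw, hqtf, hiYfac⟩ := M.fact_trivCof_fib (g ≫ iZ)
  have hYtE := h3 Yt (M.fibrant_of_fib qt hqtf (M.fibrant_of_fib pZ hpZf hZ'))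
  obtain ⟨Xh, i', p', hi'c, hi'w, hp'f, hi'fac⟩ := M.fact_trivCof_fib f'
  have hXhE := h3 Xh (M.fibrant_of_fib p' hp'f hZ')
  -- A := Z ×_{Zt} Xt
  obtain ⟨A, a1, a2, hAE, hA⟩ := h2 iZ pt hZtE hZ hXtE hptf
  have ha1f : M.Fib a1 := M.fib_pullback hA hptf
  have ha2w : M.W a2 := h1 iZ pt a1 a2 hZtE hZ hXtE hAE hiZw hptf hA
  have hφc : f ≫ iZ = iX ≫ pt := hiXfac.symm
  set φ : X ⟶ A := hA.lift f iX hφc with hφdef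
  have hφ1 : φ ≫ a1 = f := hA.lift_fst _ _ _
  have hφ2 : φ ≫ a2 = iX := hA.lift_snd _ _ _
  have hφw : M.W φ := M.w_cancel_right φ a2 ha2w (by rw [hφ2]; exact hiXw)
  -- B := Z ×_{Zt} Yt
  obtain ⟨B, b1, b2, hBE, hB⟩ := h2 iZ qt hZtE hZ hYtE hqtf
  have hb2w : M.W b2 := h1 iZ qt b1 b2 hZtE hZ hYtE hBE hiZw hqtf hB
  have hψc : g ≫ iZ = iY ≫ qt := hiYfac.symm
  set ψ : Y ⟶ B := hB.lift g iY hψc with hψdef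
  have hψ1 : ψ ≫ b1 = g := hB.lift_fst _ _ _
  have hψ2 : ψ ≫ b2 = iY := hB.lift_snd _ _ _
  have hψw : M.W ψ := M.w_cancel_right ψ b2 hb2w (by rw [hψ2]; exact hiYw)
  -- B' := Zt ×_{Z'} Y'
  obtain ⟨B', β1, β2, hB'E, hB'⟩ := h2 pZ g' hZ'E hZtE hY'E hg'
  have hβ1f : M.Fib β1 := M.fib_pullback hB' hg'
  have hβ2w : M.W β2 := h1 pZ g' β1 β2 hZ'E hZtE hY'E hB'E hpZw hg' hB'
  -- sY : Yt ⟶ Y'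
  haveI := M.lift_trivCof_fib iY g' hiYc hiYw hg'
  have sqsY : CommSq rY iY g' (qt ≫ pZ) := ⟨by
    rw [← sqY, ← hiZfac, ← Category.assoc, ← hiYfac, Category.assoc]⟩
  set sY : Yt ⟶ Y' := sqsY.lift with hsYdef
  have hsY1 : iY ≫ sY = rY := sqsY.fac_left
  have hsY2 : sY ≫ g' = qt ≫ pZ := sqsY.fac_right
  have hsYw : M.W sY := M.w_cancel_left iY sY hiYw (by rw [hsY1]; exact hrY)
  -- χ : Yt ⟶ B'
  set χ : Yt ⟶ B' := hB'.lift qt sY hsY2.symm with hχdef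
  have hχ1 : χ ≫ β1 = qt := hB'.lift_fst _ _ _
  have hχ2 : χ ≫ β2 = sY := hB'.lift_snd _ _ _
  have hχw : M.W χ := M.w_cancel_right χ β2 hβ2w (by rw [hχ2]; exact hsYw)
  -- sX : Xt ⟶ Xh
  haveI := M.lift_trivCof_fib iX p' hiXc hiXw hp'f
  have sqsX : CommSq (rX ≫ i') iX p' (pt ≫ pZ) := ⟨by
    rw [Category.assoc, hi'fac, ← sqX, ← hiZfac, ← Category.assoc, ← hiXfac, Category.assoc]⟩
  set sX : Xt ⟶ Xh := sqsX.lift with hsXdef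
  have hsX1 : iX ≫ sX = rX ≫ i' := sqsX.fac_left
  have hsX2 : sX ≫ p' = pt ≫ pZ := sqsX.fac_right
  have hsXw : M.W sX := M.w_cancel_left iX sX hiXw
    (by rw [hsX1]; exact M.w_comp rX i' hrX hi'w)
  -- P1 := Y ×_Z A
  obtain ⟨P1, e1, e2, hP1E, hP1⟩ := h2 g a1 hZ hY hAE ha1f
  have he2f : M.Fib e2 := M.fib_pullback hP1.flip hg
  set κ1 : P ⟶ P1 := hP1.lift snd (fst ≫ φ)
    (by rw [Category.assoc, hφ1, sq.w]) with hκ1def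
  have hκ11 : κ1 ≫ e1 = snd := hP1.lift_fst _ _ _
  have hκ12 : κ1 ≫ e2 = fst ≫ φ := hP1.lift_snd _ _ _
  have hpbκ1 : IsPullback fst κ1 φ e2 := by
    refine IsPullback.of_bot ?_ hκ12.symm hP1.flip
    rw [hκ11, hφ1]; exact sq
  have hκ1w : M.W κ1 := h1 φ e2 fst κ1 hAE hX hP1E hP hφw he2f hpbκ1
  -- P2 := B ×_Z A
  obtain ⟨P2, t1, t2, hP2E, hP2⟩ := h2 b1 a1 hZ hBE hAE ha1f
  have ht1f : M.Fib t1 := M.fib_pullback hP2 ha1f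
  set κ2 : P1 ⟶ P2 := hP2.lift (e1 ≫ ψ) e2
    (by rw [Category.assoc, hψ1, hP1.w]) with hκ2def
  have hκ21 : κ2 ≫ t1 = e1 ≫ ψ := hP2.lift_fst _ _ _
  have hκ22 : κ2 ≫ t2 = e2 := hP2.lift_snd _ _ _
  have hpbκ2 : IsPullback e1 κ2 ψ t1 := by
    refine IsPullback.of_bot ?_ hκ21.symm hP2
    rw [hκ22, hψ1]; exact hP1
  have hκ2w : M.W κ2 := h1 ψ t1 e1 κ2 hBE hY hP2E hP1E hψw ht1f hpbκ2
  -- Qt := Xt ×_{Zt} Yt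
  obtain ⟨Qt, u1, u2, hQtE, hQt⟩ := h2 pt qt hZtE hXtE hYtE hqtf
  have hu1f : M.Fib u1 := M.fib_pullback hQt hqtf
  set κ3 : P2 ⟶ Qt := hQt.lift (t2 ≫ a2) (t1 ≫ b2)
    (by rw [Category.assoc, Category.assoc, ← hA.w, ← hB.w, ← Category.assoc, ← hP2.w,
      Category.assoc]) with hκ3def
  have hκ31 : κ3 ≫ u1 = t2 ≫ a2 := hQt.lift_fst _ _ _
  have hκ32 : κ3 ≫ u2 = t1 ≫ b2 := hQt.lift_snd _ _ _
  have big3 : IsPullback t2 (t1 ≫ b2) (a1 ≫ iZ) qt := IsPullback.paste_vert hP2.flip hB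
  have hpbκ3 : IsPullback t2 κ3 a2 u1 := by
    refine IsPullback.of_bot ?_ hκ31.symm hQt
    rw [hκ32, ← hA.w]; exact big3
  have hκ3w : M.W κ3 := h1 a2 u1 t2 κ3 hXtE hAE hQtE hP2E ha2w hu1f hpbκ3
  -- Q3 := Xt ×_{Zt} B'
  obtain ⟨Q3, w1, w2, hQ3E, hQ3⟩ := h2 pt β1 hZtE hXtE hB'E hβ1f
  have hw2f : M.Fib w2 := M.fib_pullback hQ3.flip hptf
  set κ5 : Qt ⟶ Q3 := hQ3.lift u1 (u2 ≫ χ)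
    (by rw [Category.assoc, hχ1, hQt.w]) with hκ5def
  have hκ51 : κ5 ≫ w1 = u1 := hQ3.lift_fst _ _ _
  have hκ52 : κ5 ≫ w2 = u2 ≫ χ := hQ3.lift_snd _ _ _
  have hpbκ5 : IsPullback u2 κ5 χ w2 := by
    refine IsPullback.of_bot ?_ hκ52.symm hQ3.flip
    rw [hκ51, hχ1]; exact hQt.flip
  have hκ5w : M.W κ5 := h1 χ w2 u2 κ5 hB'E hYtE hQ3E hQtE hχw hw2f hpbκ5
  -- Qh := Xh ×_{Z'} Y'
  obtain ⟨Qh, v1, v2, hQhE, hQh⟩ := h2 p' g' hZ'E hXhE hY'E hg'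
  have hv1f : M.Fib v1 := M.fib_pullback hQh hg'
  -- lam : Q ⟶ Qh
  set lam : Q ⟶ Qh := hQh.lift (fst' ≫ i') snd'
    (by rw [Category.assoc, hi'fac, hQpb.w]) with hlamdef
  have hlam1 : lam ≫ v1 = fst' ≫ i' := hQh.lift_fst _ _ _
  have hlam2 : lam ≫ v2 = snd' := hQh.lift_snd _ _ _
  have hQE := h3 Q (M.fibrant_of_fib fst' (M.fib_pullback hQpb hg') hX')
  have hpblam : IsPullback fst' lam i' v1 := by
    refine IsPullback.of_bot ?_ hlam1.symm hQh
    rw [hlam2, hi'fac]; exact hQpb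
  have hlamw : M.W lam := h1 i' v1 fst' lam hXhE hX'E hQhE hQE hi'w hv1f hpblam
  -- κ6 : Q3 ⟶ Qh
  set κ6 : Q3 ⟶ Qh := hQh.lift (w1 ≫ sX) (w2 ≫ β2)
    (by rw [Category.assoc, hsX2, Category.assoc, ← hB'.w, ← Category.assoc, hQ3.w,
      Category.assoc]) with hκ6def
  have hκ61 : κ6 ≫ v1 = w1 ≫ sX := hQh.lift_fst _ _ _
  have hκ62 : κ6 ≫ v2 = w2 ≫ β2 := hQh.lift_snd _ _ _
  have big6 : IsPullback w1 (w2 ≫ β2) (pt ≫ pZ) g' := IsPullback.paste_vert hQ3 hB'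
  have hpbκ6 : IsPullback w1 κ6 sX v1 := by
    refine IsPullback.of_bot ?_ hκ61.symm hQh
    rw [hκ62, hsX2]; exact big6
  have hκ6w : M.W κ6 := h1 sX v1 w1 κ6 hXhE hXtE hQhE hQ3E hsXw hv1f hpbκ6
  -- The key factorization of `c ≫ lam`.
  have key : c ≫ lam = κ1 ≫ κ2 ≫ κ3 ≫ κ5 ≫ κ6 := by
    apply hQh.hom_ext
    · slice_lhs 2 3 => rw [hlam1]
      slice_lhs 1 2 => rw [hc1]
      slice_rhs 5 6 => rw [hκ61]
      slice_rhs 4 5 => rw [hκ51]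
      slice_rhs 3 4 => rw [hκ31]
      slice_rhs 2 3 => rw [hκ22]
      slice_rhs 1 2 => rw [hκ12]
      slice_rhs 2 3 => rw [hφ2]
      slice_rhs 2 3 => rw [hsX1]
      simp only [Category.assoc]
    · slice_lhs 2 3 => rw [hlam2]
      rw [hc2]
      slice_rhs 5 6 => rw [hκ62]
      slice_rhs 4 5 => rw [hκ52]
      slice_rhs 5 6 => rw [hχ2]
      slice_rhs 3 4 => rw [hκ32]
      slice_rhs 2 3 => rw [hκ21]
      slice_rhs 3 4 => rw [hψ2]
      slice_rhs 3 4 => rw [hsY1]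
      slice_rhs 1 2 => rw [hκ11]
  have hcompw : M.W (κ1 ≫ κ2 ≫ κ3 ≫ κ5 ≫ κ6) :=
    M.w_comp _ _ hκ1w (M.w_comp _ _ hκ2w (M.w_comp _ _ hκ3w (M.w_comp _ _ hκ5w hκ6w)))
  exact M.w_cancel_right c lam hlamw (key ▸ hcompw)

end Paper
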